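/- Let σ_t > 0, 0 < σ̃_A < σ̃_B, k > 0, and c > 0 with c < (σ_t²/σ̃_B)·(2π)^(−1/2). For i ∈ {A, B} define P_i(τ) = Φᶜ(τ/σ̃_i), E_i(τ) = (σ_t²/σ̃_i)·H(τ/σ̃_i), and the objective U(n_A, τ_A, n_B, τ_B) = n_A·P_A(τ_A)·E_A(τ_A) + n_B·P_B(τ_B)·E_B(τ_B) − c·(n_A + n_B) over the feasible set {n_A, n_B ≥ 0, n_A·P_A(τ_A) + n_B·P_B(τ_B) ≤ k}. Let z_A* be the unique zero of z ↦ (σ_t²/σ̃_A)·(φ(z) − z·Φᶜ(z)) − c and τ_A* = σ̃_A·z_A*. Then the supremum of U over the feasible set equals k·(σ_t²/σ̃_A)·z_A*, it is attained at (n_A, τ_A, n_B, τ_B) = (k/P_A(τ_A*), τ_A*, 0, τ_B) for any τ_B, and every feasible point with n_B > 0 has U strictly below this supremum; i.e., at any optimal solution no applicant from group B is reviewed or hired. -/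

import Mathlib

open MeasureTheory ProbabilityTheory Real

/-- Standard normal density. -/
noncomputable def stdPdf (x : ℝ) : ℝ := (Real.sqrt (2 * Real.pi))⁻¹ * Real.exp (-(x ^ 2) / 2)

/-- Standard normal CDF. -/
noncomputable def stdCdf (x : ℝ) : ℝ := ∫ u in Set.Iic x, stdPdf u

/-- Standard normal complementary CDF. -/
noncomputable def stdCcdf (x : ℝ) : ℝ := 1 - stdCdf x

/-- Standard normal hazard rate. -/
noncomputable def hazard (x : ℝ) : ℝ := stdPdf x / stdCcdf x

/-- Group-i selection probability at threshold `τ`: `P_i(τ) = Φᶜ(τ/σ̃_i)`. -/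
noncomputable def Pgrp (σtl τ : ℝ) : ℝ := stdCcdf (τ / σtl)

/-- Expected true quality of a group-i hire at threshold `τ`: `E_i(τ) = (σ_t²/σ̃_i)·H(τ/σ̃_i)`. -/
noncomputable def Egrp (σt σtl τ : ℝ) : ℝ := σt ^ 2 / σtl * hazard (τ / σtl)

/-- Principal's overall objective when reviewing `n_A, n_B` applications from each group at
thresholds `τ_A, τ_B`. -/
noncomputable def Uobj (σt σtA σtB c nA τA nB τB : ℝ) : ℝ :=
  nA * Pgrp σtA τA * Egrp σt σtA τA + nB * Pgrp σtB τB * Egrp σt σtB τB - c * (nA + nB)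

lemma stdPdf_pos (x : ℝ) : 0 < stdPdf x := by
  unfold stdPdf
  positivity

lemma continuous_stdPdf : Continuous stdPdf := by
  unfold stdPdf
  continuity

lemma integrable_stdPdf : Integrable stdPdf := by
  have h : stdPdf = fun x => (Real.sqrt (2 * Real.pi))⁻¹ * Real.exp (-(1/2 : ℝ) * x ^ 2) := by
    funext x; unfold stdPdf; ring_nf
  rw [h]
  exact (integrable_exp_neg_mul_sq (by norm_num : (0:ℝ) < 1/2)).const_mul _

lemma integral_stdPdf : ∫ x, stdPdf x = 1 := by
  have h : ∫ x, stdPdf x = (Real.sqrt (2 * Real.pi))⁻¹ * ∫ x : ℝ, Real.exp (-(1/2:ℝ) * x ^ 2) := by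
    rw [← integral_const_mul]
    congr 1; funext x; unfold stdPdf; ring_nf
  rw [h, integral_gaussian]
  have : Real.sqrt (π / (1/2)) = Real.sqrt (2 * π) := by norm_num; ring_nf
  rw [this]
  have h2 : Real.sqrt (2 * π) ≠ 0 := by positivity
  field_simp

lemma stdCcdf_eq (x : ℝ) : stdCcdf x = ∫ u in Set.Ioi x, stdPdf u := by
  unfold stdCcdf stdCdf
  have := intervalIntegral.integral_Iic_add_Ioi (b := x) integrable_stdPdf.integrableOn integrable_stdPdf.integrableOn
  rw [integral_stdPdf] at this
  linarith

lemma stdCcdf_pos (x : ℝ) : 0 < stdCcdf x := by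
  rw [stdCcdf_eq]
  rw [setIntegral_pos_iff_support_of_nonneg_ae]
  · have : Function.support stdPdf ∩ Set.Ioi x = Set.Ioi x := by
      rw [Set.inter_eq_right]
      intro y _
      exact (stdPdf_pos y).ne'
    rw [this]
    simp [Real.volume_Ioi]
  · exact Filter.Eventually.of_forall fun y => (stdPdf_pos y).le
  · exact integrable_stdPdf.integrableOn

lemma hasDerivAt_stdCdf (x : ℝ) : HasDerivAt stdCdf (stdPdf x) x := by
  have heq : ∀ y : ℝ, stdCdf y = stdCdf 0 + ∫ t in (0:ℝ)..y, stdPdf t := by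
    intro y
    have := intervalIntegral.integral_Iic_sub_Iic (μ := volume) (f := stdPdf) (a := (0:ℝ)) (b := y)
      integrable_stdPdf.integrableOn integrable_stdPdf.integrableOn
    unfold stdCdf
    linarith
  have : HasDerivAt (fun y => stdCdf 0 + ∫ t in (0:ℝ)..y, stdPdf t) (stdPdf x) x := by
    refine HasDerivAt.const_add _ ?_
    exact intervalIntegral.integral_hasDerivAt_right
      integrable_stdPdf.intervalIntegrable
      continuous_stdPdf.aestronglyMeasurable.stronglyMeasurableAtFilter
      continuous_stdPdf.continuousAt
  exact this.congr_of_eventuallyEq (Filter.Eventually.of_forall heq)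

lemma hasDerivAt_stdPdf (x : ℝ) : HasDerivAt stdPdf (-x * stdPdf x) x := by
  unfold stdPdf
  have h : HasDerivAt (fun y : ℝ => -(y ^ 2) / 2) (-x) x := by
    have := ((hasDerivAt_pow 2 x).neg).div_const 2
    refine this.congr_deriv ?_
    simp
    ring
  have := (h.exp).const_mul (Real.sqrt (2 * Real.pi))⁻¹
  refine this.congr_deriv ?_
  ring

lemma hasDerivAt_stdCcdf (x : ℝ) : HasDerivAt stdCcdf (-stdPdf x) x := by
  unfold stdCcdf
  simpa using (hasDerivAt_stdCdf x).const_sub 1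

lemma key_le (m z : ℝ) : stdPdf z - m * stdCcdf z ≤ stdPdf m - m * stdCcdf m := by
  set h : ℝ → ℝ := fun y => stdPdf y - m * stdCcdf y with hh
  have hder : ∀ y : ℝ, HasDerivAt h ((m - y) * stdPdf y) y := by
    intro y
    have := (hasDerivAt_stdPdf y).sub ((hasDerivAt_stdCcdf y).const_mul m)
    refine this.congr_deriv ?_
    ring
  have hdiff : Differentiable ℝ h := fun y => (hder y).differentiableAt
  rcases le_total z m with hzm | hmz
  · have hmono : MonotoneOn h (Set.Iic m) := by
      apply monotoneOn_of_deriv_nonneg (convex_Iic m) hdiff.continuous.continuousOn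
        hdiff.differentiableOn
      intro y hy
      rw [interior_Iic] at hy
      rw [(hder y).deriv]
      have : y < m := hy
      nlinarith [stdPdf_pos y]
    exact hmono hzm (Set.mem_Iic.2 le_rfl) hzm
  · have hanti : AntitoneOn h (Set.Ici m) := by
      apply antitoneOn_of_deriv_nonpos (convex_Ici m) hdiff.continuous.continuousOn
        hdiff.differentiableOn
      intro y hy
      rw [interior_Ici] at hy
      rw [(hder y).deriv]
      have : m < y := hy
      nlinarith [stdPdf_pos y]
    exact hanti (Set.mem_Ici.2 le_rfl) hmz hmz

lemma G_strictAnti : StrictAnti (fun z : ℝ => stdPdf z - z * stdCcdf z) := by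
  apply strictAnti_of_deriv_neg
  intro x
  have hder : HasDerivAt (fun z : ℝ => stdPdf z - z * stdCcdf z) (-stdCcdf x) x := by
    have := (hasDerivAt_stdPdf x).sub ((hasDerivAt_id x).mul (hasDerivAt_stdCcdf x))
    refine this.congr_deriv ?_
    simp [id]
  rw [hder.deriv]
  simpa using stdCcdf_pos x

lemma stdPdf_zero : stdPdf 0 = (Real.sqrt (2 * Real.pi))⁻¹ := by
  unfold stdPdf; norm_num

lemma PE_simp (σt σtl τ : ℝ) : Pgrp σtl τ * Egrp σt σtl τ = σt ^ 2 / σtl * stdPdf (τ / σtl) := by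
  unfold Pgrp Egrp hazard
  have h := (stdCcdf_pos (τ / σtl)).ne'
  rw [mul_comm, mul_assoc, div_mul_cancel₀ _ h]

/-- Disparate variance model: at the optimum of the joint two-group problem, no applicant from
the noisier group `B` is reviewed or hired. The supremum of the objective over the feasible
set equals `k·(σ_t²/σ̃_A)·z_A*`, it is attained with `n_B = 0` at threshold `τ_A* = σ̃_A·z_A*`,
and every feasible point with `n_B > 0` is strictly suboptimal. -/
theorem no_hire_from_noisy_group (σt σtA σtB c k zA : ℝ)
    (hσt : 0 < σt) (hA : 0 < σtA) (hAB : σtA < σtB) (hk : 0 < k)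
    (hc : 0 < c) (hviable : c < σt ^ 2 / σtB / Real.sqrt (2 * Real.pi))
    (hzA : σt ^ 2 / σtA * (stdPdf zA - zA * stdCcdf zA) - c = 0) :
    (∀ nA τA nB τB : ℝ, 0 ≤ nA → 0 ≤ nB →
        nA * Pgrp σtA τA + nB * Pgrp σtB τB ≤ k →
        Uobj σt σtA σtB c nA τA nB τB ≤ k * (σt ^ 2 / σtA) * zA) ∧
    (∀ τB : ℝ,
        (0 ≤ k / Pgrp σtA (σtA * zA) ∧ (0:ℝ) ≤ 0 ∧
          (k / Pgrp σtA (σtA * zA)) * Pgrp σtA (σtA * zA) + 0 * Pgrp σtB τB ≤ k) ∧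
        Uobj σt σtA σtB c (k / Pgrp σtA (σtA * zA)) (σtA * zA) 0 τB
          = k * (σt ^ 2 / σtA) * zA) ∧
    (∀ nA τA nB τB : ℝ, 0 ≤ nA → 0 < nB →
        nA * Pgrp σtA τA + nB * Pgrp σtB τB ≤ k →
        Uobj σt σtA σtB c nA τA nB τB < k * (σt ^ 2 / σtA) * zA) := by
  have h2π : (0:ℝ) < Real.sqrt (2 * Real.pi) := Real.sqrt_pos.2 (by positivity)
  have hB : 0 < σtB := hA.trans hAB
  have hS : 0 < σt ^ 2 / σtA := by positivity
  have hSB : 0 < σt ^ 2 / σtB := by positivity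
  have hSBS : σt ^ 2 / σtB < σt ^ 2 / σtA :=
    div_lt_div_of_pos_left (by positivity) hA hAB
  have hc' : σt ^ 2 / σtA * (stdPdf zA - zA * stdCcdf zA) = c := by linarith
  -- zA is positive
  have hzpos : 0 < zA := by
    have h0 : stdPdf zA - zA * stdCcdf zA < stdPdf 0 - 0 * stdCcdf 0 := by
      simp only [zero_mul, sub_zero, stdPdf_zero]
      have hlt : (σt ^ 2 / σtA) * (stdPdf zA - zA * stdCcdf zA)
          < (σt ^ 2 / σtA) * (Real.sqrt (2 * Real.pi))⁻¹ := by
        rw [hc']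
        calc c < σt ^ 2 / σtB / Real.sqrt (2 * Real.pi) := hviable
          _ < σt ^ 2 / σtA / Real.sqrt (2 * Real.pi) := by gcongr
          _ = (σt ^ 2 / σtA) * (Real.sqrt (2 * Real.pi))⁻¹ := by
              rw [div_eq_mul_inv]
      exact lt_of_mul_lt_mul_left hlt hS.le
    exact G_strictAnti.lt_iff_gt.mp (by simpa using h0)
  have hlam : 0 < σt ^ 2 / σtA * zA := mul_pos hS hzpos
  -- key per-unit bounds
  have keyA : ∀ z : ℝ, σt ^ 2 / σtA * stdPdf z - c ≤ (σt ^ 2 / σtA * zA) * stdCcdf z := by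
    intro z
    have hk := key_le zA z
    nlinarith [hk, hS]
  have keyB : ∀ z : ℝ, σt ^ 2 / σtB * stdPdf z - c < (σt ^ 2 / σtA * zA) * stdCcdf z := by
    intro z
    have h1 := keyA z
    nlinarith [stdPdf_pos z]
  refine ⟨?_, ?_, ?_⟩
  · intro nA τA nB τB hnA hnB hfeas
    have hU : Uobj σt σtA σtB c nA τA nB τB =
        nA * (σt ^ 2 / σtA * stdPdf (τA / σtA)) + nB * (σt ^ 2 / σtB * stdPdf (τB / σtB))
          - c * (nA + nB) := by
      unfold Uobj
      rw [mul_assoc, PE_simp, mul_assoc, PE_simp]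
    rw [hU]
    simp only [Pgrp] at hfeas
    have h1 := mul_le_mul_of_nonneg_left (keyA (τA / σtA)) hnA
    have h2 := mul_le_mul_of_nonneg_left (keyB (τB / σtB)).le hnB
    nlinarith [mul_le_mul_of_nonneg_left hfeas hlam.le]
  · intro τB
    have hPA : Pgrp σtA (σtA * zA) = stdCcdf zA := by
      unfold Pgrp
      rw [mul_div_cancel_left₀ _ hA.ne']
    have hCpos := stdCcdf_pos zA
    have hfeas : k / Pgrp σtA (σtA * zA) * Pgrp σtA (σtA * zA) + 0 * Pgrp σtB τB = k := by
      rw [hPA, div_mul_cancel₀ _ hCpos.ne', zero_mul, add_zero]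
    refine ⟨⟨by rw [hPA]; positivity, le_rfl, le_of_eq hfeas⟩, ?_⟩
    unfold Uobj Egrp hazard
    rw [hPA, mul_div_cancel_left₀ _ hA.ne', div_mul_cancel₀ _ hCpos.ne', zero_mul, zero_mul,
      add_zero, add_zero]
    have hc'' : σt ^ 2 * (stdPdf zA - zA * stdCcdf zA) = c * σtA := by
      field_simp at hc'
      linarith
    field_simp
    linear_combination hc''
  · intro nA τA nB τB hnA hnB hfeas
    have hU : Uobj σt σtA σtB c nA τA nB τB =
        nA * (σt ^ 2 / σtA * stdPdf (τA / σtA)) + nB * (σt ^ 2 / σtB * stdPdf (τB / σtB))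
          - c * (nA + nB) := by
      unfold Uobj
      rw [mul_assoc, PE_simp, mul_assoc, PE_simp]
    rw [hU]
    simp only [Pgrp] at hfeas
    have h1 := mul_le_mul_of_nonneg_left (keyA (τA / σtA)) hnA
    have h2 := mul_lt_mul_of_pos_left (keyB (τB / σtB)) hnB
    nlinarith [mul_le_mul_of_nonneg_left hfeas hlam.le]
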